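/- Let T be the infinite ternary tree with origin o, principal branches Y^(1), Y^(2), Y^(3) labeled in correspondence with the direction indexing of the rotor at o. Set the rotors along the rightmost path to infinity in Y^(3) initially pointing in direction 2 and all remaining rotors initially pointing in direction 1. Let R(m) be the number of chips among the first m sequential rotor-router walks started at o that return to o. Then R(m) = ⌊m/2⌋ for all m; in particular |m/2 − R(m)| ≤ 1/2, where m/2 is the expected number of returns for m independent random walks. -/

import Mathlib

/-!
The infinite `d`-regular tree with rotor-router walk.

Vertices are encoded as `Option (Fin d × List (Fin (d - 1)))`: `none` is the
origin `o`, and `some (b, w)` is the vertex of the `b`-th principal branch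
reached from the root of that branch by the path `w` (so `|some (b, w)| =
w.length + 1`).

Every vertex carries a rotor with `d` directions indexed by `ZMod d`, cycling
in increasing order.  At the origin the value `v` points to the root of the
`(v+1)`-st principal branch (directions `1, …, d` are indexed by values
`0, …, d - 1`).  At a non-origin vertex, a value `v < d - 1` points to the
child obtained by appending `v`, and the value `d - 1` (direction `d`) points
to the parent.  A rotor-router step first increments the rotor at the chip's
location, then moves the chip in the new direction.
-/

/-- Vertices of the infinite `d`-regular tree. -/
abbrev TV (d : ℕ) := Option (Fin d × List (Fin (d - 1)))

/-- Rotor configurations on the infinite `d`-regular tree. -/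
abbrev TConf (d : ℕ) := TV d → ZMod d

/-- One rotor-router step: increment the rotor at the chip's location, then
move the chip in the new direction. -/
def tstep (d : ℕ) (p : TConf d × TV d) : TConf d × TV d :=
  match p with
  | (C, none) =>
    let r := C none + 1
    let C' := Function.update C none r
    if h : r.val < d then (C', some (⟨r.val, h⟩, [])) else (C', none)
  | (C, some (b, w)) =>
    let r := C (some (b, w)) + 1
    let C' := Function.update C (some (b, w)) r
    if h : r.val < d - 1 then (C', some (b, w ++ [⟨r.val, h⟩]))
    else (C', if w = [] then none else some (b, w.dropLast))

/-- The number of edges in the path from the origin to a vertex. -/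
def depth (d : ℕ) : TV d → ℕ
  | none => 0
  | some (_, w) => w.length + 1

/-- The same step, but absorbing at the origin: used to track a chip from the
moment it has left the origin until it possibly returns there. -/
def tstepAbs (d : ℕ) (p : TConf d × TV d) : TConf d × TV d :=
  if p.2 = none then p else tstep d p

/-- The trajectory of a single chip started at the origin with rotor
configuration `C`: `traj d C k` is the state after `k + 1` rotor-router
steps, the walk being stopped (absorbed) if the chip returns to the origin. -/
def traj (d : ℕ) (C : TConf d) (k : ℕ) : TConf d × TV d :=
  (tstepAbs d)^[k] (tstep d (C, none))

/-- The chip started at the origin eventually returns to the origin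
(otherwise it escapes to infinity, visiting each vertex finitely often). -/
def chipReturns (d : ℕ) (C : TConf d) : Prop := ∃ k, (traj d C k).2 = none

/-- The rotor configuration left behind by a chip started at the origin: the
rotor at each vertex takes its eventual value along the trajectory (if the
chip returns this is the configuration upon return; if the chip escapes to
infinity it visits each vertex only finitely often, so each rotor is
eventually constant and the configuration is well-defined). -/
noncomputable def nextConf (d : ℕ) (C : TConf d) : TConf d := fun v =>
  haveI := Classical.dec (∃ c : ZMod d, ∃ K : ℕ, ∀ k, K ≤ k → (traj d C k).1 v = c)
  if h : ∃ c : ZMod d, ∃ K : ℕ, ∀ k, K ≤ k → (traj d C k).1 v = c then h.choose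
  else C v

/-- The rotor configuration seen by the `(j+1)`-st chip, when chips are
started at the origin one at a time, beginning from the configuration `C0`. -/
noncomputable def confSeq (d : ℕ) (C0 : TConf d) : ℕ → TConf d
  | 0 => C0
  | j + 1 => nextConf d (confSeq d C0 j)

/-- The `(j+1)`-st chip (`j = 0, 1, 2, …`) escapes to infinity. -/
def escapes (d : ℕ) (C0 : TConf d) (j : ℕ) : Prop :=
  ¬ chipReturns d (confSeq d C0 j)

/-- The initial rotor configuration of Proposition 4.2: on the infinite
ternary tree, with principal branches `Y⁽¹⁾, Y⁽²⁾, Y⁽³⁾` labeled in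
correspondence with the direction indexing of the rotor at the origin
(branch indices `0, 1, 2 : Fin 3`), the rotors along the rightmost path to
infinity in `Y⁽³⁾` (branch index `2`; always descending to the right child,
child index `1`) initially point in direction `2` (encoded by `1 : ZMod 3`),
and all remaining rotors initially point in direction `1` (encoded by
`0 : ZMod 3`). -/
def rrConf : TConf 3 := fun v =>
  match v with
  | none => 0
  | some (b, w) => if b = 2 ∧ ∀ i ∈ w, i = 1 then 1 else 0

namespace RRAux

abbrev W := List (Fin 2)
abbrev BC := W → ZMod 3
abbrev BS := BC × Option W

def bstep (p : BS) : BS :=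
  match p with
  | (C, none) => (C, none)
  | (C, some w) =>
    let r := C w + 1
    let C' := Function.update C w r
    if h : r.val < 2 then (C', some (w ++ [⟨r.val, h⟩]))
    else (C', if w = [] then none else some w.dropLast)

lemma bstep_some (C : BC) (w : W) : bstep (C, some w) =
    if h : (C w + 1).val < 2 then
      (Function.update C w (C w + 1), some (w ++ [⟨(C w + 1).val, h⟩]))
    else (Function.update C w (C w + 1), if w = [] then none else some w.dropLast) := by
  simp only [bstep]

lemma bstep_none (C : BC) : bstep (C, none) = (C, none) := rfl

lemma bstep_fix {p : BS} (h : p.2 = none) : bstep p = p := by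
  obtain ⟨C, q⟩ := p; cases q
  · rfl
  · simp at h

lemma iter_fix {s : BS} {j : ℕ} (h : (bstep^[j] s).2 = none) :
    ∀ k, j ≤ k → bstep^[k] s = bstep^[j] s := by
  intro k hk
  obtain ⟨t, rfl⟩ := Nat.exists_eq_add_of_le hk
  induction t with
  | zero => rfl
  | succ t ih =>
    rw [show j + (t+1) = (j+t) + 1 by omega, Function.iterate_succ_apply', ih (by omega)]
    exact bstep_fix (by rw [ih (by omega)] at *; exact h)

/-! counts and closed-form configurations -/

def f0 (n : ℕ) : ℕ := (n - 1) / 2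
def f1 (n : ℕ) : ℕ := 2 * (n / 4) + (n % 4 + 3) / 4

def fc : Fin 2 → ℕ → ℕ
  | 0 => f0
  | 1 => f1

def rv (n : ℕ) : ZMod 3 :=
  if n = 0 then 0 else if n % 4 = 1 then 1 else if n % 4 = 3 then 0 else 2

def NN : ℕ → W → ℕ
  | n, [] => n
  | n, c :: w => NN (fc c n) w

def B (n : ℕ) : BC := fun w => rv (NN n w)

lemma B_nil (n : ℕ) : B n [] = rv n := rfl
lemma B_cons (n : ℕ) (c : Fin 2) (w : W) : B n (c :: w) = B (fc c n) w := rfl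

lemma fc_zero (c : Fin 2) : fc c 0 = 0 := by
  fin_cases c <;> simp [fc, f0, f1]

lemma NN_zero (w : W) : NN 0 w = 0 := by
  induction w with
  | nil => rfl
  | cons c w ih => rw [NN, fc_zero]; exact ih

lemma B_zero (w : W) : B 0 w = 0 := by
  rw [B, NN_zero]; rfl

lemma rv_mod1 {n : ℕ} (h : n % 4 = 1) : rv n = 1 := by
  rw [rv, if_neg (by omega), if_pos h]
lemma rv_mod2 {n : ℕ} (h : n % 4 = 2) : rv n = 2 := by
  rw [rv, if_neg (by omega), if_neg (by omega), if_neg (by omega)]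
lemma rv_mod3 {n : ℕ} (h : n % 4 = 3) : rv n = 0 := by
  rw [rv, if_neg (by omega), if_neg (by omega), if_pos h]
lemma rv_mod0 {n : ℕ} (h : n % 4 = 0) (h0 : n ≠ 0) : rv n = 2 := by
  rw [rv, if_neg h0, if_neg (by omega), if_neg (by omega)]

/-! glueing a subtree configuration below child `c` -/

def bglue (c : Fin 2) (D E : BC) : BC := fun w =>
  match w with
  | [] => D []
  | c' :: w' => if c' = c then E w' else D (c' :: w')

lemma bglue_nil (c : Fin 2) (D E : BC) : bglue c D E [] = D [] := rfl
lemma bglue_cons_self (c : Fin 2) (D E : BC) (w : W) : bglue c D E (c :: w) = E w := by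
  simp [bglue]
lemma bglue_cons_ne (c c' : Fin 2) (D E : BC) (w : W) (h : c' ≠ c) :
    bglue c D E (c' :: w) = D (c' :: w) := by
  simp [bglue, h]

def up (c : Fin 2) : Option W → Option W
  | none => some []
  | some u => some (c :: u)

lemma up_ne_none (c : Fin 2) (p : Option W) : up c p ≠ none := by
  cases p <;> simp [up]

lemma update_bglue (c : Fin 2) (D E : BC) (u : W) (x : ZMod 3) :
    Function.update (bglue c D E) (c :: u) x = bglue c D (Function.update E u x) := by
  funext w
  match w with
  | [] => rw [Function.update_of_ne (by simp), bglue_nil, bglue_nil]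
  | c' :: w' =>
    by_cases hc : c' = c
    · subst hc
      by_cases hw : w' = u
      · subst hw; rw [Function.update_self, bglue_cons_self, Function.update_self]
      · rw [Function.update_of_ne (by simp [hw]), bglue_cons_self, bglue_cons_self,
          Function.update_of_ne hw]
    · rw [Function.update_of_ne (by simp [hc]), bglue_cons_ne _ _ _ _ _ hc,
        bglue_cons_ne _ _ _ _ _ hc]

lemma sub_sim (c : Fin 2) (D E : BC) (u : W) :
    bstep (bglue c D E, some (c :: u)) =
      (bglue c D (bstep (E, some u)).1, up c (bstep (E, some u)).2) := by
  rw [bstep_some, bstep_some, bglue_cons_self]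
  by_cases h : (E u + 1).val < 2
  · rw [dif_pos h, dif_pos h, update_bglue]
    simp [up, List.cons_append]
  · rw [dif_neg h, dif_neg h, update_bglue]
    by_cases hu : u = []
    · subst hu; simp [up]
    · rw [if_neg hu, if_neg (by simp)]
      simp [up, List.dropLast_cons_of_ne_nil hu]

lemma lift_iter (c : Fin 2) (D E : BC) (u : W) (k : ℕ)
    (h : ∀ j < k, (bstep^[j] (E, some u)).2 ≠ none) :
    bstep^[k] (bglue c D E, some (c :: u)) =
      (bglue c D (bstep^[k] (E, some u)).1, up c (bstep^[k] (E, some u)).2) := by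
  induction k with
  | zero => simp [up]
  | succ k ih =>
    rw [Function.iterate_succ_apply', Function.iterate_succ_apply',
      ih (fun j hj => h j (by omega))]
    have hp : (bstep^[k] (E, some u)).2 ≠ none := h k (by omega)
    obtain ⟨uk, huk⟩ := Option.ne_none_iff_exists'.mp hp
    have hs : bstep^[k] (E, some u) = ((bstep^[k] (E, some u)).1, some uk) :=
      Prod.ext rfl huk
    rw [huk, up, hs, sub_sim]


/-! escape and return specifications -/

def st (n : ℕ) : BS := (B n, some [])

def Esc (n : ℕ) : Prop :=
  (∀ k, (bstep^[k] (st n)).2 ≠ none) ∧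
  ∀ w, ∃ K, ∀ k, K ≤ k → (bstep^[k] (st n)).1 w = B (n + 1) w

def Ret (n : ℕ) : Prop := ∃ K, bstep^[K] (st n) = (B (n + 1), none)

lemma RetMin {n : ℕ} (h : Ret n) :
    ∃ K, bstep^[K] (st n) = (B (n + 1), none) ∧
      ∀ j < K, (bstep^[j] (st n)).2 ≠ none := by
  obtain ⟨K, hK⟩ := h
  have hex : ∃ j, (bstep^[j] (st n)).2 = none := ⟨K, by rw [hK]⟩
  refine ⟨Nat.find hex, ?_, fun j hj => Nat.find_min hex hj⟩
  have h1 : Nat.find hex ≤ K := Nat.find_min' hex (by rw [hK])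
  rw [← iter_fix (Nat.find_spec hex) K h1, hK]

/-! base case: the chip on the all-zero configuration escapes down the right spine -/

def Z (k : ℕ) : BC := fun w =>
  if w.length < k ∧ w = List.replicate w.length 1 then 1 else 0

lemma Z_zero : Z 0 = B 0 := by
  funext w; rw [B_zero, Z, if_neg (by omega)]

lemma zero_iter (k : ℕ) :
    bstep^[k] (st 0) = (Z k, some (List.replicate k 1)) := by
  induction k with
  | zero => simp [st, Z_zero]
  | succ k ih =>
    rw [Function.iterate_succ_apply', ih, bstep_some]
    have hz : Z k (List.replicate k 1) = 0 := by
      rw [Z, if_neg (by simp)]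
    rw [hz]
    have h1 : ((0 : ZMod 3) + 1).val < 2 := by decide
    rw [dif_pos h1]
    have hrep : List.replicate k (1 : Fin 2) ++ [⟨((0:ZMod 3)+1).val, h1⟩] =
        List.replicate (k+1) 1 := by
      rw [List.replicate_succ' (n := k)]
      rfl
    rw [hrep]
    congr 1
    funext w
    by_cases hw : w = List.replicate k 1
    · subst hw
      rw [Function.update_self, Z, if_pos (by simp)]
      decide
    · rw [Function.update_of_ne hw, Z, Z]
      by_cases h2 : w = List.replicate w.length 1
      · have hlen : w.length ≠ k := by
          intro hl; rw [← hl] at hw; exact hw h2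
        by_cases h3 : w.length < k
        · rw [if_pos ⟨h3, h2⟩, if_pos ⟨by omega, h2⟩]
        · rw [if_neg (by omega), if_neg (by push_neg; intro h4; omega)]
      · rw [if_neg (by tauto), if_neg (by tauto)]

lemma fin2_cases (c : Fin 2) : c = 0 ∨ c = 1 := by omega

lemma B_one (w : W) : B 1 w = if w = List.replicate w.length 1 then 1 else 0 := by
  have h : ∀ w : W, NN 1 w = if w = List.replicate w.length 1 then 1 else 0 := by
    intro w
    induction w with
    | nil => simp [NN]
    | cons c w ih =>
      rw [NN]
      rcases fin2_cases c with rfl | rfl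
      · rw [show fc 0 1 = 0 from rfl, NN_zero, if_neg (by simp [List.replicate_succ])]
      · rw [show fc 1 1 = 1 from rfl, ih]
        by_cases h2 : w = List.replicate w.length 1
        · rw [if_pos h2, if_pos (by simpa [List.replicate_succ] using h2)]
        · rw [if_neg h2, if_neg (by simp [List.replicate_succ]; tauto)]
  rw [B, h]
  by_cases h2 : w = List.replicate w.length 1
  · rw [if_pos h2, if_pos h2]; rfl
  · rw [if_neg h2, if_neg h2]; rfl

lemma esc_zero : Esc 0 := by
  constructor
  · intro k
    rw [zero_iter]
    simp
  · intro w
    refine ⟨w.length + 1, fun k hk => ?_⟩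
    rw [zero_iter]
    show Z k w = B (0 + 1) w
    rw [show (0:ℕ) + 1 = 1 from rfl, B_one]
    by_cases h2 : w = List.replicate w.length 1
    · rw [Z, if_pos ⟨by omega, h2⟩, if_pos h2]
    · rw [Z, if_neg (by tauto), if_neg h2]


/-! root step computations -/

lemma root_step0 (C : BC) (h : C [] = 0) :
    bstep (C, some []) = (Function.update C [] 1, some [1]) := by
  rw [bstep_some, h, dif_pos (show ((0:ZMod 3)+1).val < 2 by decide)]
  rfl

lemma root_step1 (C : BC) (h : C [] = 1) :
    bstep (C, some []) = (Function.update C [] 2, none) := by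
  rw [bstep_some, h, dif_neg (show ¬ ((1:ZMod 3)+1).val < 2 by decide)]
  rfl

lemma root_step2 (C : BC) (h : C [] = 2) :
    bstep (C, some []) = (Function.update C [] 0, some [0]) := by
  rw [bstep_some, h, dif_pos (show ((2:ZMod 3)+1).val < 2 by decide)]
  rfl

lemma update_root_glue (C : BC) (x : ZMod 3) (c : Fin 2) :
    Function.update C [] x = bglue c (Function.update C [] x) (fun w => C (c :: w)) := by
  funext w
  match w with
  | [] => rw [bglue_nil]
  | c' :: w' =>
    by_cases hc : c' = c
    · subst hc
      rw [bglue_cons_self, Function.update_of_ne (by simp)]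
    · rw [bglue_cons_ne _ _ _ _ _ hc]

lemma glue_self_b (D : BC) (c : Fin 2) (E : BC) (h : ∀ w, D (c :: w) = E w) :
    D = bglue c D E := by
  funext w
  match w with
  | [] => rw [bglue_nil]
  | c' :: w' =>
    by_cases hc : c' = c
    · subst hc; rw [bglue_cons_self]; exact h w'
    · rw [bglue_cons_ne _ _ _ _ _ hc]

lemma B_ext {m : ℕ} (D : BC) (hnil : D [] = rv m)
    (h0 : ∀ w, D ((0:Fin 2)::w) = B (f0 m) w)
    (h1 : ∀ w, D ((1:Fin 2)::w) = B (f1 m) w) :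
    D = B m := by
  funext w
  match w with
  | [] => rw [hnil]; rfl
  | c :: w' =>
    rcases fin2_cases c with rfl | rfl
    · rw [h0]; rfl
    · rw [h1]; rfl

/-! the main alternation theorem on a branch -/

theorem mainB (n : ℕ) : (n % 2 = 0 → Esc n) ∧ (n % 2 = 1 → Ret n) := by
  induction n using Nat.strong_induction_on with
  | _ n ih =>
  by_cases hn0 : n = 0
  · subst hn0
    exact ⟨fun _ => esc_zero, fun h => by omega⟩
  rcases (show n % 4 = 0 ∨ n % 4 = 1 ∨ n % 4 = 2 ∨ n % 4 = 3 by omega) with h4 | h4 | h4 | h4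
  · -- n ≡ 0 mod 4, n ≠ 0 : escape, child 0 (returns) then child 1 (escapes)
    refine ⟨fun _ => ?_, fun h => by omega⟩
    have hf0odd : f0 n % 2 = 1 := by simp only [f0]; omega
    have hf0lt : f0 n < n := by simp only [f0]; omega
    have hf1even : f1 n % 2 = 0 := by simp only [f1]; omega
    have hf1lt : f1 n < n := by simp only [f1]; omega
    obtain ⟨K0, hK0, hKpos⟩ := RetMin ((ih (f0 n) hf0lt).2 hf0odd)
    obtain ⟨hpos2, hconv2⟩ := (ih (f1 n) hf1lt).1 hf1even
    set D1 : BC := Function.update (B n) [] 0 with hD1def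
    have hD1 : D1 = bglue 0 D1 (B (f0 n)) :=
      glue_self_b _ _ _ (fun w => by
        rw [hD1def, Function.update_of_ne (by simp)]; rfl)
    have step1 : bstep (st n) = (bglue 0 D1 (B (f0 n)), some ((0:Fin 2) :: [])) := by
      rw [show st n = (B n, some []) from rfl, root_step2 _ (by rw [B_nil, rv_mod0 h4 hn0])]
      exact Prod.ext hD1 rfl
    have keyA : ∀ k ≤ K0, bstep^[k+1] (st n) =
        (bglue 0 D1 (bstep^[k] (st (f0 n))).1, up 0 ((bstep^[k] (st (f0 n))).2)) := by
      intro k hk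
      rw [Function.iterate_succ_apply, step1,
        lift_iter 0 D1 (B (f0 n)) [] k (fun j hj => hKpos j (by omega))]
      rfl
    have stepK1 : bstep^[K0+1] (st n) = (bglue 0 D1 (B (f0 n + 1)), some []) := by
      rw [keyA K0 le_rfl, hK0]
      rfl
    set G := bglue 0 D1 (B (f0 n + 1)) with hGdef
    set D2 : BC := Function.update G [] 1 with hD2def
    have hD2 : D2 = bglue 1 D2 (B (f1 n)) :=
      glue_self_b _ _ _ (fun w => by
        rw [hD2def, Function.update_of_ne (by simp), hGdef,
          bglue_cons_ne 0 1 _ _ _ (by decide), hD1def,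
          Function.update_of_ne (by simp)]
        rfl)
    have stepK2 : bstep^[K0+2] (st n) = (bglue 1 D2 (B (f1 n)), some ((1:Fin 2) :: [])) := by
      rw [show K0+2 = (K0+1)+1 by ring, Function.iterate_succ_apply', stepK1,
        root_step0 G (by rw [hGdef, bglue_nil, hD1def, Function.update_self])]
      exact Prod.ext hD2 rfl
    have keyB : ∀ k, bstep^[k + (K0+2)] (st n) =
        (bglue 1 D2 (bstep^[k] (st (f1 n))).1, up 1 ((bstep^[k] (st (f1 n))).2)) := by
      intro k
      rw [Function.iterate_add_apply, stepK2,
        lift_iter 1 D2 (B (f1 n)) [] k (fun j _ => hpos2 j)]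
      rfl
    constructor
    · intro k
      rcases (show k = 0 ∨ (∃ k', k' ≤ K0 ∧ k = k' + 1) ∨ (∃ k', k = k' + (K0+2)) by
        rcases le_or_gt k (K0+1) with h | h
        · rcases Nat.eq_zero_or_pos k with rfl | hk
          · exact Or.inl rfl
          · exact Or.inr (Or.inl ⟨k - 1, by omega, by omega⟩)
        · exact Or.inr (Or.inr ⟨k - (K0+2), by omega⟩)) with rfl | ⟨k', hk', rfl⟩ | ⟨k', rfl⟩
      · simp [st]
      · rw [keyA k' hk']; exact up_ne_none _ _
      · rw [keyB k']; exact up_ne_none _ _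
    · intro w
      match w with
      | [] =>
        refine ⟨K0+2, fun k hk => ?_⟩
        obtain ⟨k', rfl⟩ : ∃ k', k = k' + (K0+2) := ⟨k - (K0+2), by omega⟩
        rw [keyB k']
        show bglue 1 D2 (bstep^[k'] (st (f1 n))).1 [] = B (n+1) []
        rw [bglue_nil, hD2def, Function.update_self, B_nil, rv_mod1 (by omega)]
      | (0:Fin 2) :: w' =>
        refine ⟨K0+2, fun k hk => ?_⟩
        obtain ⟨k', rfl⟩ : ∃ k', k = k' + (K0+2) := ⟨k - (K0+2), by omega⟩
        rw [keyB k']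
        show bglue 1 D2 (bstep^[k'] (st (f1 n))).1 ((0:Fin 2)::w') = B (n+1) ((0:Fin 2)::w')
        rw [bglue_cons_ne _ _ _ _ _ (by decide), hD2def,
          Function.update_of_ne (by simp), hGdef, bglue_cons_self, B_cons]
        congr 1
        show f0 n + 1 = fc 0 (n+1)
        show f0 n + 1 = f0 (n+1)
        simp only [f0]; omega
      | (1:Fin 2) :: w' =>
        obtain ⟨K2, hK2⟩ := hconv2 w'
        refine ⟨K2 + (K0+2), fun k hk => ?_⟩
        obtain ⟨k', hk', rfl⟩ : ∃ k', K2 ≤ k' ∧ k = k' + (K0+2) := ⟨k - (K0+2), by omega, by omega⟩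
        rw [keyB k']
        show bglue 1 D2 (bstep^[k'] (st (f1 n))).1 ((1:Fin 2)::w') = B (n+1) ((1:Fin 2)::w')
        rw [bglue_cons_self, hK2 k' hk', B_cons]
        congr 1
        show f1 n + 1 = fc 1 (n+1)
        show f1 n + 1 = f1 (n+1)
        simp only [f1]; omega
  · -- n ≡ 1 mod 4 : immediate return
    refine ⟨fun h => by omega, fun _ => ⟨1, ?_⟩⟩
    rw [Function.iterate_one, show st n = (B n, some []) from rfl,
      root_step1 _ (by rw [B_nil, rv_mod1 h4])]
    refine Prod.ext ?_ rfl
    show Function.update (B n) [] 2 = B (n+1)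
    refine B_ext _ ?_ (fun w => ?_) (fun w => ?_)
    · rw [Function.update_self, rv_mod2 (by omega)]
    · rw [Function.update_of_ne (by simp), B_cons]
      show B (fc 0 n) w = _
      show B (f0 n) w = _
      congr 1
      simp only [f0]; omega
    · rw [Function.update_of_ne (by simp), B_cons]
      show B (fc 1 n) w = _
      show B (f1 n) w = _
      congr 1
      simp only [f1]; omega
  · -- n ≡ 2 mod 4 : escape via child 0
    refine ⟨fun _ => ?_, fun h => by omega⟩
    have hf0even : f0 n % 2 = 0 := by simp only [f0]; omega
    have hf0lt : f0 n < n := by simp only [f0]; omega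
    obtain ⟨hpos, hconv⟩ := (ih (f0 n) hf0lt).1 hf0even
    set D1 : BC := Function.update (B n) [] 0 with hD1def
    have hD1 : D1 = bglue 0 D1 (B (f0 n)) :=
      glue_self_b _ _ _ (fun w => by
        rw [hD1def, Function.update_of_ne (by simp)]; rfl)
    have step1 : bstep (st n) = (bglue 0 D1 (B (f0 n)), some ((0:Fin 2) :: [])) := by
      rw [show st n = (B n, some []) from rfl, root_step2 _ (by rw [B_nil, rv_mod2 h4])]
      exact Prod.ext hD1 rfl
    have key : ∀ k, bstep^[k+1] (st n) =
        (bglue 0 D1 (bstep^[k] (st (f0 n))).1, up 0 ((bstep^[k] (st (f0 n))).2)) := by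
      intro k
      rw [Function.iterate_succ_apply, step1,
        lift_iter 0 D1 (B (f0 n)) [] k (fun j _ => hpos j)]
      rfl
    constructor
    · intro k
      rcases Nat.eq_zero_or_pos k with rfl | hk
      · simp [st]
      · obtain ⟨k', rfl⟩ : ∃ k', k = k' + 1 := ⟨k - 1, by omega⟩
        rw [key k']; exact up_ne_none _ _
    · intro w
      match w with
      | [] =>
        refine ⟨1, fun k hk => ?_⟩
        obtain ⟨k', rfl⟩ : ∃ k', k = k' + 1 := ⟨k - 1, by omega⟩
        rw [key k']
        show bglue 0 D1 (bstep^[k'] (st (f0 n))).1 [] = B (n+1) []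
        rw [bglue_nil, hD1def, Function.update_self, B_nil, rv_mod3 (by omega)]
      | (0:Fin 2) :: w' =>
        obtain ⟨K2, hK2⟩ := hconv w'
        refine ⟨K2 + 1, fun k hk => ?_⟩
        obtain ⟨k', hk', rfl⟩ : ∃ k', K2 ≤ k' ∧ k = k' + 1 := ⟨k - 1, by omega, by omega⟩
        rw [key k']
        show bglue 0 D1 (bstep^[k'] (st (f0 n))).1 ((0:Fin 2)::w') = B (n+1) ((0:Fin 2)::w')
        rw [bglue_cons_self, hK2 k' hk', B_cons]
        congr 1
        show f0 n + 1 = fc 0 (n+1)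
        show f0 n + 1 = f0 (n+1)
        simp only [f0]; omega
      | (1:Fin 2) :: w' =>
        refine ⟨1, fun k hk => ?_⟩
        obtain ⟨k', rfl⟩ : ∃ k', k = k' + 1 := ⟨k - 1, by omega⟩
        rw [key k']
        show bglue 0 D1 (bstep^[k'] (st (f0 n))).1 ((1:Fin 2)::w') = B (n+1) ((1:Fin 2)::w')
        rw [bglue_cons_ne _ _ _ _ _ (by decide), hD1def,
          Function.update_of_ne (by simp), B_cons, B_cons]
        show B (f1 n) w' = B (f1 (n+1)) w'
        congr 1
        simp only [f1]; omega
  · -- n ≡ 3 mod 4 : return after child 1 returns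
    refine ⟨fun h => by omega, fun _ => ?_⟩
    have hf1odd : f1 n % 2 = 1 := by simp only [f1]; omega
    have hf1lt : f1 n < n := by simp only [f1]; omega
    obtain ⟨K0, hK0, hKpos⟩ := RetMin ((ih (f1 n) hf1lt).2 hf1odd)
    set D1 : BC := Function.update (B n) [] 1 with hD1def
    have hD1 : D1 = bglue 1 D1 (B (f1 n)) :=
      glue_self_b _ _ _ (fun w => by
        rw [hD1def, Function.update_of_ne (by simp)]; rfl)
    have step1 : bstep (st n) = (bglue 1 D1 (B (f1 n)), some ((1:Fin 2) :: [])) := by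
      rw [show st n = (B n, some []) from rfl, root_step0 _ (by rw [B_nil, rv_mod3 h4])]
      exact Prod.ext hD1 rfl
    have stepK1 : bstep^[K0+1] (st n) = (bglue 1 D1 (B (f1 n + 1)), some []) := by
      rw [Function.iterate_succ_apply, step1,
        lift_iter 1 D1 (B (f1 n)) [] K0 (fun j hj => hKpos j hj)]
      rw [show (bstep^[K0] (B (f1 n), some [])) = bstep^[K0] (st (f1 n)) from rfl, hK0]
      rfl
    refine ⟨K0+2, ?_⟩
    rw [show K0+2 = (K0+1)+1 by ring, Function.iterate_succ_apply', stepK1,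
      root_step1 _ (by rw [bglue_nil, hD1def, Function.update_self])]
    refine Prod.ext ?_ rfl
    show Function.update (bglue 1 D1 (B (f1 n + 1))) [] 2 = B (n+1)
    refine B_ext _ ?_ (fun w => ?_) (fun w => ?_)
    · rw [Function.update_self, rv_mod0 (by omega) (by omega)]
    · rw [Function.update_of_ne (by simp), bglue_cons_ne _ _ _ _ _ (by decide),
        hD1def, Function.update_of_ne (by simp), B_cons]
      show B (f0 n) w = _
      congr 1
      simp only [f0]; omega
    · rw [Function.update_of_ne (by simp), bglue_cons_self]
      congr 1
      simp only [f1]; omega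


/-! ### lifting a branch walk to the whole tree -/

def tp (b : Fin 3) : Option W → TV 3
  | none => none
  | some w => some (b, w)

def glue (b : Fin 3) (D : TConf 3) (E : BC) : TConf 3 := fun v =>
  match v with
  | none => D none
  | some (b', w) => if b' = b then E w else D (some (b', w))

lemma glue_none (b : Fin 3) (D : TConf 3) (E : BC) : glue b D E none = D none := rfl
lemma glue_self (b : Fin 3) (D : TConf 3) (E : BC) (w : W) :
    glue b D E (some (b, w)) = E w := by simp [glue]
lemma glue_ne (b b' : Fin 3) (D : TConf 3) (E : BC) (w : W) (h : b' ≠ b) :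
    glue b D E (some (b', w)) = D (some (b', w)) := by simp [glue, h]

lemma update_glue (b : Fin 3) (D : TConf 3) (E : BC) (u : W) (x : ZMod 3) :
    Function.update (glue b D E) (some (b, u)) x = glue b D (Function.update E u x) := by
  funext v
  match v with
  | none => rw [Function.update_of_ne (by simp), glue_none, glue_none]
  | some (b', w) =>
    by_cases hb : b' = b
    · subst hb
      by_cases hw : w = u
      · subst hw; rw [Function.update_self, glue_self, Function.update_self]
      · rw [Function.update_of_ne (by simp [hw]), glue_self, glue_self,
          Function.update_of_ne hw]
    · rw [Function.update_of_ne (by simp [hb]), glue_ne _ _ _ _ _ hb, glue_ne _ _ _ _ _ hb]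

lemma glue_self_t (D : TConf 3) (b : Fin 3) (E : BC) (h : ∀ w, D (some (b, w)) = E w) :
    D = glue b D E := by
  funext v
  match v with
  | none => rw [glue_none]
  | some (b', w) =>
    by_cases hb : b' = b
    · subst hb; rw [glue_self]; exact h w
    · rw [glue_ne _ _ _ _ _ hb]

lemma tree_sim (b : Fin 3) (D : TConf 3) (E : BC) (p : Option W) :
    tstepAbs 3 (glue b D E, tp b p) =
      (glue b D (bstep (E, p)).1, tp b (bstep (E, p)).2) := by
  cases p with
  | none => rw [bstep_none]; rfl
  | some w =>
    rw [tstepAbs, if_neg (by simp [tp])]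
    show tstep 3 (glue b D E, some (b, w)) = _
    simp only [tstep, bstep]
    rw [glue_self]
    by_cases h : (E w + 1).val < 2
    · rw [dif_pos (show (E w + 1).val < 3 - 1 from h), dif_pos h, update_glue]
      rfl
    · rw [dif_neg (show ¬ (E w + 1).val < 3 - 1 from h), dif_neg h, update_glue]
      by_cases hw : w = []
      · subst hw; rfl
      · rw [if_neg hw, if_neg hw]
        rfl

lemma tree_lift (b : Fin 3) (D : TConf 3) (E : BC) (p : Option W) (k : ℕ) :
    (tstepAbs 3)^[k] (glue b D E, tp b p) =
      (glue b D (bstep^[k] (E, p)).1, tp b (bstep^[k] (E, p)).2) := by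
  induction k with
  | zero => rfl
  | succ k ih =>
    rw [Function.iterate_succ_apply', Function.iterate_succ_apply', ih]
    have : bstep^[k] (E, p) = ((bstep^[k] (E, p)).1, (bstep^[k] (E, p)).2) := rfl
    rw [this, tree_sim]

lemma traj_eq (C : TConf 3) (b : Fin 3) (hb : (C none + 1).val = b.val)
    (E : BC) (hE : ∀ w, C (some (b, w)) = E w) (k : ℕ) :
    traj 3 C k =
      (glue b (Function.update C none (C none + 1)) (bstep^[k] (E, some [])).1,
        tp b (bstep^[k] (E, some [])).2) := by
  have hlt : (C none + 1).val < 3 := ZMod.val_lt _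
  have h1 : tstep 3 (C, none) =
      (Function.update C none (C none + 1), some (b, [])) := by
    have hfin : (⟨(C none + 1).val, hlt⟩ : Fin 3) = b := Fin.ext hb
    simp only [tstep]
    rw [dif_pos hlt, hfin]
  have h2 : Function.update C none (C none + 1) =
      glue b (Function.update C none (C none + 1)) E :=
    glue_self_t _ _ _ (fun w => by rw [Function.update_of_ne (by simp), hE])
  rw [traj, h1,
    show (Function.update C none (C none + 1), (some (b, ([] : W)) : TV 3)) =
      (glue b (Function.update C none (C none + 1)) E, tp b (some []))
      from Prod.ext h2 rfl,
    tree_lift]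

/-! ### the configurations seen by successive chips -/

def cnt (b : Fin 3) (j : ℕ) : ℕ :=
  if b.val = 0 then j / 3 else if b.val = 1 then (j + 2) / 3 else (j + 1) / 3 + 1

def DD (j : ℕ) : TConf 3 := fun v =>
  match v with
  | none => (j : ZMod 3)
  | some (b, w) => B (cnt b j) w

lemma DD_none (j : ℕ) : DD j none = (j : ZMod 3) := rfl
lemma DD_some (j : ℕ) (b : Fin 3) (w : W) : DD j (some (b, w)) = B (cnt b j) w := rfl

lemma fin3_cases (b : Fin 3) : b = 0 ∨ b = 1 ∨ b = 2 := by omega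

lemma DD_zero : DD 0 = rrConf := by
  funext v
  match v with
  | none => show ((0:ℕ) : ZMod 3) = rrConf none; rw [Nat.cast_zero]; rfl
  | some (b, w) =>
    rw [DD_some]
    rcases fin3_cases b with rfl | rfl | rfl
    · rw [show cnt 0 0 = 0 from rfl, B_zero]
      simp only [rrConf]
      rw [if_neg (by simp)]
    · rw [show cnt 1 0 = 0 from rfl, B_zero]
      simp only [rrConf]
      rw [if_neg (by simp)]
    · rw [show cnt 2 0 = 1 from rfl, B_one]
      simp only [rrConf]
      by_cases hw : ∀ i ∈ w, i = (1 : Fin 2)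
      · rw [if_pos (List.eq_replicate_iff.mpr ⟨rfl, hw⟩), if_pos ⟨by trivial, hw⟩]
      · rw [if_neg (fun hrep => hw (by rw [List.eq_replicate_iff] at hrep; exact hrep.2)),
          if_neg (by tauto)]

lemma nextConf_eq {C : TConf 3} {v : TV 3} {c : ZMod 3} {K : ℕ}
    (h : ∀ k, K ≤ k → (traj 3 C k).1 v = c) : nextConf 3 C v = c := by
  have hex : ∃ c : ZMod 3, ∃ K : ℕ, ∀ k, K ≤ k → (traj 3 C k).1 v = c := ⟨c, K, h⟩
  unfold nextConf
  rw [dif_pos hex]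
  obtain ⟨K', hK'⟩ := hex.choose_spec
  rw [← hK' (max K K') (le_max_right _ _)]
  exact h (max K K') (le_max_left _ _)

lemma cnt_parity {j : ℕ} (b : Fin 3) (hb : b.val = (j + 1) % 3) :
    cnt b j % 2 = j % 2 := by
  rw [cnt]
  by_cases h0 : b.val = 0
  · rw [if_pos h0]; omega
  by_cases h1 : b.val = 1
  · rw [if_neg h0, if_pos h1]; omega
  · rw [if_neg h0, if_neg h1]
    have := b.is_lt
    omega

lemma cnt_succ_self {j : ℕ} (b : Fin 3) (hb : b.val = (j + 1) % 3) :
    cnt b (j + 1) = cnt b j + 1 := by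
  rw [cnt, cnt]
  by_cases h0 : b.val = 0
  · rw [if_pos h0, if_pos h0]; omega
  by_cases h1 : b.val = 1
  · rw [if_neg h0, if_pos h1, if_neg h0, if_pos h1]; omega
  · rw [if_neg h0, if_neg h1, if_neg h0, if_neg h1]
    have := b.is_lt
    omega

lemma cnt_succ_ne {j : ℕ} (b b' : Fin 3) (hb : b.val = (j + 1) % 3) (hne : b' ≠ b) :
    cnt b' (j + 1) = cnt b' j := by
  have hv : b'.val ≠ b.val := fun h => hne (Fin.ext h)
  have h3 := b.is_lt
  have h3' := b'.is_lt
  rw [cnt, cnt]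
  by_cases h0 : b'.val = 0
  · rw [if_pos h0, if_pos h0]; omega
  by_cases h1 : b'.val = 1
  · rw [if_neg h0, if_pos h1, if_neg h0, if_pos h1]; omega
  · rw [if_neg h0, if_neg h1, if_neg h0, if_neg h1]; omega

lemma chipLemma (j : ℕ) :
    nextConf 3 (DD j) = DD (j + 1) ∧ (chipReturns 3 (DD j) ↔ j % 2 = 1) := by
  set b : Fin 3 := ⟨((j + 1 : ℕ) : ZMod 3).val, ZMod.val_lt _⟩ with hbdef
  have hbv : b.val = (j + 1) % 3 := by
    rw [hbdef]
    show ((j + 1 : ℕ) : ZMod 3).val = (j + 1) % 3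
    exact ZMod.val_natCast _ _
  have hb : (DD j none + 1).val = b.val := by
    have hcast : (DD j none + 1) = ((j + 1 : ℕ) : ZMod 3) := by
      rw [DD_none]
      push_cast
      ring
    rw [hcast, hbdef]
  set n := cnt b j with hn
  have htraj : ∀ k, traj 3 (DD j) k =
      (glue b (Function.update (DD j) none (DD j none + 1)) (bstep^[k] (st n)).1,
        tp b (bstep^[k] (st n)).2) :=
    fun k => traj_eq (DD j) b hb (B n) (fun w => DD_some j b w) k
  set D := Function.update (DD j) none (DD j none + 1) with hD
  have hDnone : D none = ((j + 1 : ℕ) : ZMod 3) := by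
    rw [hD, Function.update_self, DD_none]
    push_cast
    ring
  have hDsome : ∀ b' w, D (some (b', w)) = B (cnt b' j) w := fun b' w => by
    rw [hD, Function.update_of_ne (by simp), DD_some]
  have hpar : n % 2 = j % 2 := cnt_parity b hbv
  by_cases hj : j % 2 = 1
  · -- the chip returns
    obtain ⟨K, hK⟩ := (mainB n).2 (by omega)
    have hfix : ∀ k, K ≤ k → bstep^[k] (st n) = (B (n + 1), none) :=
      fun k hk => by rw [iter_fix (by rw [hK]) k hk, hK]
    have htrajK : ∀ k, K ≤ k → traj 3 (DD j) k = (glue b D (B (n + 1)), none) := by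
      intro k hk
      rw [htraj k, hfix k hk]
      rfl
    refine ⟨?_, ⟨fun _ => hj, fun _ => ⟨K, by rw [htrajK K le_rfl]⟩⟩⟩
    funext v
    refine nextConf_eq (K := K) (fun k hk => ?_)
    rw [htrajK k hk]
    show glue b D (B (n + 1)) v = DD (j + 1) v
    match v with
    | none => rw [glue_none, hDnone, DD_none]
    | some (b', w) =>
      by_cases hb' : b' = b
      · subst hb'
        rw [glue_self, DD_some, cnt_succ_self b hbv, hn]
      · rw [glue_ne _ _ _ _ _ hb', hDsome, DD_some, cnt_succ_ne b b' hbv hb']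
  · -- the chip escapes
    obtain ⟨hpos, hconv⟩ := (mainB n).1 (by omega)
    refine ⟨?_, ⟨fun hr => ?_, fun h => absurd h hj⟩⟩
    · funext v
      match v with
      | none =>
        refine nextConf_eq (K := 0) (fun k _ => ?_)
        rw [htraj k]
        show glue b D (bstep^[k] (st n)).1 none = DD (j + 1) none
        rw [glue_none, hDnone, DD_none]
      | some (b', w) =>
        by_cases hb' : b' = b
        · subst hb'
          obtain ⟨K, hK⟩ := hconv w
          refine nextConf_eq (K := K) (fun k hk => ?_)
          rw [htraj k]
          show glue b D (bstep^[k] (st n)).1 (some (b, w)) = _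
          rw [glue_self, hK k hk, DD_some, cnt_succ_self b hbv, hn]
        · refine nextConf_eq (K := 0) (fun k _ => ?_)
          rw [htraj k]
          show glue b D (bstep^[k] (st n)).1 (some (b', w)) = _
          rw [glue_ne _ _ _ _ _ hb', hDsome, DD_some, cnt_succ_ne b b' hbv hb']
    · exfalso
      obtain ⟨k, hk⟩ := hr
      rw [htraj k] at hk
      obtain ⟨u, hu⟩ := Option.ne_none_iff_exists'.mp (hpos k)
      rw [hu] at hk
      exact Option.some_ne_none _ (show (some (b, u) : TV 3) = none from hk)

lemma confSeq_eq : ∀ j, confSeq 3 rrConf j = DD j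
  | 0 => DD_zero.symm
  | j + 1 => by
      rw [show confSeq 3 rrConf (j + 1) = nextConf 3 (confSeq 3 rrConf j) from rfl,
        confSeq_eq j, (chipLemma j).1]

lemma returns_iff (j : ℕ) : chipReturns 3 (confSeq 3 rrConf j) ↔ j % 2 = 1 := by
  rw [confSeq_eq j]
  exact (chipLemma j).2

lemma card_odd (m : ℕ) :
    ((Finset.range m).filter (fun j => j % 2 = 1)).card = m / 2 := by
  induction m with
  | zero => simp
  | succ m ih =>
    rw [Finset.range_add_one, Finset.filter_insert]
    by_cases h : m % 2 = 1
    · rw [if_pos h, Finset.card_insert_of_notMem (by simp), ih]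
      omega
    · rw [if_neg h, ih]
      omega

end RRAux

/-- With the initial rotor configuration `rrConf`, the number `R(m)` of chips
among the first `m` sequential rotor-router walks started at the origin that
return to the origin is exactly `⌊m/2⌋`; in particular
`|m/2 − R(m)| ≤ 1/2`, where `m/2 = E(m)` is the expected number of returns
for `m` independent random walks. -/
theorem stmt11 (m : ℕ) :
    {j : ℕ | j < m ∧ chipReturns 3 (confSeq 3 rrConf j)}.ncard = m / 2 ∧
    |(m : ℝ) / 2 -
        ({j : ℕ | j < m ∧ chipReturns 3 (confSeq 3 rrConf j)}.ncard : ℝ)| ≤ 1 / 2 := by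
  have hset : {j : ℕ | j < m ∧ chipReturns 3 (confSeq 3 rrConf j)} =
      ↑((Finset.range m).filter (fun j => j % 2 = 1)) := by
    ext j
    simp only [Set.mem_setOf_eq, Finset.coe_filter, Finset.mem_range]
    rw [RRAux.returns_iff j]
  rw [hset, Set.ncard_coe_finset, RRAux.card_odd]
  refine ⟨rfl, ?_⟩
  rcases Nat.even_or_odd m with ⟨a, rfl⟩ | ⟨a, rfl⟩
  · rw [show (a + a) / 2 = a by omega]
    push_cast
    rw [show ((a : ℝ) + a) / 2 - a = 0 by ring, abs_zero]
    norm_num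
  · rw [show (2 * a + 1) / 2 = a by omega]
    push_cast
    rw [show (2 * (a : ℝ) + 1) / 2 - a = 1 / 2 by ring, abs_of_nonneg (by norm_num)]
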